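/- Consider an anonymous game G = (I, λ, V, (A_i)_{i∈I}, J) and let S denote the set of action distributions of admissible profiles; assume that for every η ∈ S the map a ↦ J(a,η) is Borel measurable. Suppose J is monotone on S and let Ψ̃ be a Nash equilibrium with action distribution η̃ = Ψ̃♯λ. Then for every admissible profile Ψ with action distribution η = Ψ♯λ one has ∫ J(a,η) d(η − η̃)(a) ≥ ∫ J(a,η̃) d(η − η̃)(a) ≥ 0, where ∫ φ d(η − η̃) denotes ∫ φ dη − ∫ φ dη̃. -/

import Mathlib

open MeasureTheory

/-- Remark: in a monotone anonymous game, if `Ψ̃` is a Nash equilibrium with distribution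
`ηt` and `Ψ` is any admissible profile with distribution `η`, then
`∫ J(a,η) d(η − ηt) ≥ ∫ J(a,ηt) d(η − ηt) ≥ 0`. -/
theorem monotone_nash_variational_inequality
    {I V : Type*} [MeasurableSpace I] [MetricSpace V] [MeasurableSpace V] [BorelSpace V]
    (lam : Measure I) [IsProbabilityMeasure lam]
    (A : I → Set V) (hA : ∀ i, (A i).Nonempty)
    (J : V → Measure V → ℝ)
    -- the set of action distributions of admissible profiles
    (S : Set (Measure V))
    (hS : S = {θ | ∃ Ψ : I → V, Measurable Ψ ∧ (∀ᵐ i ∂lam, Ψ i ∈ A i) ∧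
      θ = Measure.map Ψ lam})
    -- measurability of the cost
    (hJmeas : ∀ θ ∈ S, Measurable (fun a => J a θ))
    -- monotonicity of the cost on S (including the integrability requirements)
    (hmono : ∀ θ ∈ S, ∀ θ' ∈ S,
      Integrable (fun a => J a θ) θ ∧ Integrable (fun a => J a θ) θ' ∧
      Integrable (fun a => J a θ') θ ∧ Integrable (fun a => J a θ') θ' ∧
      0 ≤ (∫ a, J a θ ∂θ - ∫ a, J a θ ∂θ') - (∫ a, J a θ' ∂θ - ∫ a, J a θ' ∂θ'))
    -- Ψ̃ is a Nash equilibrium with distribution ηt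
    (Ψt : I → V) (hΨtmeas : Measurable Ψt)
    (hΨt : ∀ᵐ i ∂lam, Ψt i ∈ A i ∧
      ∀ b ∈ A i, J (Ψt i) (Measure.map Ψt lam) ≤ J b (Measure.map Ψt lam))
    -- Ψ is any admissible profile with distribution η
    (Ψ : I → V) (hΨmeas : Measurable Ψ) (hΨ : ∀ᵐ i ∂lam, Ψ i ∈ A i)
    (η ηt : Measure V) (hη : η = Measure.map Ψ lam) (hηt : ηt = Measure.map Ψt lam) :
    (∫ a, J a η ∂η - ∫ a, J a η ∂ηt ≥ ∫ a, J a ηt ∂η - ∫ a, J a ηt ∂ηt) ∧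
      (∫ a, J a ηt ∂η - ∫ a, J a ηt ∂ηt ≥ 0) := by
  subst hη hηt
  set η := Measure.map Ψ lam with hη
  set ηt := Measure.map Ψt lam with hηt
  have hηS : η ∈ S := by rw [hS]; exact ⟨Ψ, hΨmeas, hΨ, rfl⟩
  have hηtS : ηt ∈ S := by rw [hS]; exact ⟨Ψt, hΨtmeas, hΨt.mono fun i h => h.1, rfl⟩
  obtain ⟨h1, h2, h3, h4, h5⟩ := hmono η hηS ηt hηtS
  refine ⟨by linarith, ?_⟩
  have hm : Measurable (fun a => J a ηt) := hJmeas ηt hηtS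
  have e1 : ∫ a, J a ηt ∂η = ∫ i, J (Ψ i) ηt ∂lam :=
    integral_map hΨmeas.aemeasurable hm.aestronglyMeasurable
  have e2 : ∫ a, J a ηt ∂ηt = ∫ i, J (Ψt i) ηt ∂lam :=
    integral_map hΨtmeas.aemeasurable hm.aestronglyMeasurable
  have i3 : Integrable (fun i => J (Ψ i) ηt) lam := by
    have := (integrable_map_measure hm.aestronglyMeasurable hΨmeas.aemeasurable).mp h3
    simpa [Function.comp_def] using this
  have i4 : Integrable (fun i => J (Ψt i) ηt) lam := by
    have := (integrable_map_measure hm.aestronglyMeasurable hΨtmeas.aemeasurable).mp h4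
    simpa [Function.comp_def] using this
  have key : ∫ a, J a ηt ∂ηt ≤ ∫ a, J a ηt ∂η := by
    rw [e1, e2]
    refine integral_mono_ae i4 i3 ?_
    filter_upwards [hΨt, hΨ] with i hi hi'
    exact hi.2 (Ψ i) hi'
  linarith
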